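/- Let G be a finite simple undirected graph with n vertices and m edges, and let 𝕊_cyc be the system of all orientations d of G such that G⃗^d contains a directed cycle. Then: (i) vc(¬𝕊_cyc) = n − k, where k is the number of connected components of G; (ii) if G contains a cycle, then dvc(𝕊_cyc) = m − c, where c is the number of edges of a smallest cycle in G. -/

import Mathlib

/-- `𝕊` shatters `Y ⊆ X`: for every `f ∈ {0,1}^Y` there is `g ∈ {0,1}^{X−Y}` with `g⋆f ∈ S`;
equivalently, every `f : α → Bool` agrees on `Y` with some member of `S`. -/
def Shatters {α : Type*} (S : Set (α → Bool)) (Y : Set α) : Prop :=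
  ∀ f : α → Bool, ∃ h ∈ S, Set.EqOn h f Y

/-- `𝕊` strongly shatters `Y ⊆ X`: there is `g ∈ {0,1}^{X−Y}` such that for every
`f ∈ {0,1}^Y`, `g⋆f ∈ S` (here `g⋆f` is expressed as the member `h` of `S` agreeing
with `f` on `Y` and with `g` on `Yᶜ`). -/
def StronglyShatters {α : Type*} (S : Set (α → Bool)) (Y : Set α) : Prop :=
  ∃ g : α → Bool, ∀ f : α → Bool, ∃ h ∈ S, Set.EqOn h f Y ∧ Set.EqOn h g Yᶜ

/-- The family of sets shattered by the system. -/
def str {α : Type*} (S : Set (α → Bool)) : Set (Set α) :=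
  {Y | Shatters S Y}

/-- The family of sets strongly shattered by the system. -/
def sstr {α : Type*} (S : Set (α → Bool)) : Set (Set α) :=
  {Y | StronglyShatters S Y}


/-- The VC-dimension of a system: the maximum cardinality of a shattered set. -/
noncomputable def vcNat {α : Type*} (S : Set (α → Bool)) : ℕ :=
  sSup {n | ∃ Y : Set α, Shatters S Y ∧ Y.ncard = n}

/-- The dual VC-dimension of a system: the maximum cardinality of a strongly
shattered set. -/
noncomputable def dvcNat {α : Type*} (S : Set (α → Bool)) : ℕ :=
  sSup {n | ∃ Y : Set α, StronglyShatters S Y ∧ Y.ncard = n}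


/-- The arc relation of the digraph obtained by orienting the edges of `X ⊆ E(G)`
according to `d` (relative to the reference orientation `ρ`): `d e = false` keeps
the reference direction `(ρ e).1 → (ρ e).2`, `d e = true` reverses it. -/
def arcsOn {V : Type*} (G : SimpleGraph V) (ρ : Sym2 V → V × V)
    (X : Set G.edgeSet) (d : G.edgeSet → Bool) : V → V → Prop :=
  fun u v => ∃ e : G.edgeSet, e ∈ X ∧
    ((d e = false ∧ ρ e.val = (u, v)) ∨ (d e = true ∧ ρ e.val = (v, u)))

/-- The arc relation of the digraph `G⃗^d` obtained by orienting all edges of `G`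
according to `d`. -/
def arcs {V : Type*} (G : SimpleGraph V) (ρ : Sym2 V → V × V)
    (d : G.edgeSet → Bool) : V → V → Prop :=
  arcsOn G ρ Set.univ d

/-- A digraph contains a directed cycle iff some vertex lies on a closed directed
walk of positive length. -/
def HasDiCycle {V : Type*} (R : V → V → Prop) : Prop :=
  ∃ v, Relation.TransGen R v v

/-- The subgraph `G_X` of `G` on the full vertex set, with edge set `X ⊆ E(G)`. -/
def subgraphOf {V : Type*} (G : SimpleGraph V) (X : Set G.edgeSet) : SimpleGraph V :=
  SimpleGraph.fromEdgeSet (Subtype.val '' X)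


-- ===================== auxiliary development =====================
open SimpleGraph Relation

section Aux
variable {V : Type*} {G : SimpleGraph V} {ρ : Sym2 V → V × V}

lemma subgraphOf_le (X : Set G.edgeSet) : subgraphOf G X ≤ G := by
  have : SimpleGraph.fromEdgeSet (Subtype.val '' X) ≤ SimpleGraph.fromEdgeSet G.edgeSet := by
    apply SimpleGraph.fromEdgeSet_mono
    rintro x ⟨e, -, rfl⟩
    exact e.prop
  rwa [SimpleGraph.fromEdgeSet_edgeSet] at this

lemma edgeSet_subgraphOf (X : Set G.edgeSet) :
    (subgraphOf G X).edgeSet = Subtype.val '' X := by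
  rw [subgraphOf, edgeSet_fromEdgeSet]
  rw [sdiff_eq_left]
  rw [Set.disjoint_left]
  rintro x ⟨e, -, rfl⟩ hd
  exact G.not_isDiag_of_mem_edgeSet e.prop hd

lemma edge_eq_of_arcsOn (hρ : ∀ e ∈ G.edgeSet, Sym2.mk (ρ e).1 (ρ e).2 = e)
    {d : G.edgeSet → Bool} {u v : V} {e : G.edgeSet}
    (h : (d e = false ∧ ρ e.val = (u, v)) ∨ (d e = true ∧ ρ e.val = (v, u))) :
    e.val = s(u, v) := by
  rcases h with ⟨-, h⟩ | ⟨-, h⟩ <;> rw [← hρ e.val e.prop, h]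
  exact Sym2.eq_swap

lemma arcsOn_adj (hρ : ∀ e ∈ G.edgeSet, Sym2.mk (ρ e).1 (ρ e).2 = e)
    {X : Set G.edgeSet} {d : G.edgeSet → Bool} {u v : V}
    (h : arcsOn G ρ X d u v) : (subgraphOf G X).Adj u v := by
  obtain ⟨e, heX, hc⟩ := h
  have he : e.val = s(u, v) := edge_eq_of_arcsOn hρ hc
  have hne : u ≠ v := by
    intro huv
    apply G.not_isDiag_of_mem_edgeSet e.prop
    rw [he, huv]
    exact Sym2.mk_isDiag_iff.2 rfl
  rw [subgraphOf, SimpleGraph.fromEdgeSet_adj]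
  exact ⟨⟨e, heX, he⟩, hne⟩

lemma arcsOn_antisymm (hρ : ∀ e ∈ G.edgeSet, Sym2.mk (ρ e).1 (ρ e).2 = e)
    {X : Set G.edgeSet} {d : G.edgeSet → Bool} {u v : V}
    (h1 : arcsOn G ρ X d u v) (h2 : arcsOn G ρ X d v u) : False := by
  have hne : u ≠ v := (arcsOn_adj hρ h1).ne
  obtain ⟨e1, -, hc1⟩ := h1
  obtain ⟨e2, -, hc2⟩ := h2
  have he1 : e1.val = s(u, v) := edge_eq_of_arcsOn hρ hc1
  have he2 : e2.val = s(u, v) := by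
    rw [edge_eq_of_arcsOn hρ hc2]; exact Sym2.eq_swap
  have hee : e1 = e2 := Subtype.ext (he1.trans he2.symm)
  subst hee
  rcases hc1 with ⟨hd1, hr1⟩ | ⟨hd1, hr1⟩ <;> rcases hc2 with ⟨hd2, hr2⟩ | ⟨hd2, hr2⟩
  · exact hne (by have := hr1.symm.trans hr2; exact (Prod.ext_iff.1 this).1)
  · exact absurd (hd1.symm.trans hd2) (by simp)
  · exact absurd (hd1.symm.trans hd2) (by simp)
  · have h := hr1.symm.trans hr2
    rw [Prod.ext_iff] at h
    exact hne h.2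

open Classical in
/-- Orientation of edges along a walk. -/
noncomputable def dOfWalk (G : SimpleGraph V) (ρ : Sym2 V → V × V) :
    ∀ {u v : V}, G.Walk u v → G.edgeSet → Bool
  | _, _, .nil => fun _ => false
  | u, _, .cons (v := x) _ q => fun e =>
      if e.val = s(u, x) then (if ρ e.val = (u, x) then false else true)
      else dOfWalk G ρ q e

lemma arcs_head (hρ : ∀ e ∈ G.edgeSet, Sym2.mk (ρ e).1 (ρ e).2 = e)
    {a x w : V} (hadj : G.Adj a x) (q : G.Walk x w) (h : G.edgeSet → Bool)
    (hag : ∀ e : G.edgeSet, e.val ∈ (SimpleGraph.Walk.cons hadj q).edges →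
      h e = dOfWalk G ρ (SimpleGraph.Walk.cons hadj q) e) :
    arcs G ρ h a x := by
  classical
  have hmem : s(a, x) ∈ G.edgeSet := hadj
  set e₀ : G.edgeSet := ⟨s(a, x), hmem⟩ with he₀
  refine ⟨e₀, Set.mem_univ _, ?_⟩
  have hv : h e₀ = dOfWalk G ρ (SimpleGraph.Walk.cons hadj q) e₀ :=
    hag e₀ (by simp [he₀])
  rw [dOfWalk] at hv
  simp only [he₀, if_pos rfl] at hv
  by_cases hr : ρ (e₀ : Sym2 V) = (a, x)
  · left
    rw [if_pos hr] at hv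
    exact ⟨hv, hr⟩
  · right
    rw [if_neg hr] at hv
    refine ⟨hv, ?_⟩
    have hmk : Sym2.mk (ρ (e₀ : Sym2 V)).1 (ρ (e₀ : Sym2 V)).2 = s(a, x) := hρ _ e₀.prop
    rcases Sym2.eq_iff.1 hmk with ⟨h1, h2⟩ | ⟨h1, h2⟩
    · exact absurd (Prod.ext h1 h2) hr
    · exact Prod.ext h1 h2

lemma agree_tail (hρ : ∀ e ∈ G.edgeSet, Sym2.mk (ρ e).1 (ρ e).2 = e)
    {a x w : V} (hadj : G.Adj a x) (q : G.Walk x w) (h : G.edgeSet → Bool)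
    (hnd : (SimpleGraph.Walk.cons hadj q).edges.Nodup)
    (hag : ∀ e : G.edgeSet, e.val ∈ (SimpleGraph.Walk.cons hadj q).edges →
      h e = dOfWalk G ρ (SimpleGraph.Walk.cons hadj q) e) :
    ∀ e : G.edgeSet, e.val ∈ q.edges → h e = dOfWalk G ρ q e := by
  classical
  have hnotin : s(a, x) ∉ q.edges := (List.nodup_cons.1 (by simpa using hnd)).1
  intro e he
  have hv : h e = dOfWalk G ρ (SimpleGraph.Walk.cons hadj q) e := hag e (by simp [he])
  rw [dOfWalk] at hv
  simp only at hv
  rw [if_neg] at hv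
  · exact hv
  · intro hc
    rw [hc] at he
    exact hnotin he

lemma reflTransGen_arcs_of_walk (hρ : ∀ e ∈ G.edgeSet, Sym2.mk (ρ e).1 (ρ e).2 = e)
    {u v : V} (p : G.Walk u v) (hnd : p.edges.Nodup) (h : G.edgeSet → Bool)
    (hag : ∀ e : G.edgeSet, e.val ∈ p.edges → h e = dOfWalk G ρ p e) :
    ReflTransGen (arcs G ρ h) u v := by
  induction p with
  | nil => exact ReflTransGen.refl
  | cons hadj q ih =>
    have hnd' : q.edges.Nodup := (List.nodup_cons.1 (by simpa using hnd)).2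
    exact ReflTransGen.head (arcs_head hρ hadj q h hag)
      (ih hnd' (agree_tail hρ hadj q h hnd hag))

lemma transGen_arcs_of_walk (hρ : ∀ e ∈ G.edgeSet, Sym2.mk (ρ e).1 (ρ e).2 = e)
    {u : V} (p : G.Walk u u) (hnd : p.edges.Nodup) (hlen : 0 < p.length)
    (h : G.edgeSet → Bool)
    (hag : ∀ e : G.edgeSet, e.val ∈ p.edges → h e = dOfWalk G ρ p e) :
    Relation.TransGen (arcs G ρ h) u u := by
  cases p with
  | nil => simp at hlen
  | cons hadj q =>
    have hnd' : q.edges.Nodup := (List.nodup_cons.1 (by simpa using hnd)).2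
    exact Relation.TransGen.head' (arcs_head hρ hadj q h hag)
      (reflTransGen_arcs_of_walk hρ q hnd' h (agree_tail hρ hadj q h hnd hag))

/-- From a `TransGen` chain we get a walk whose darts are all `R`-arcs. -/
lemma walk_of_transGen {H : SimpleGraph V} {R : V → V → Prop}
    (hadj : ∀ u v, R u v → H.Adj u v) {u v : V} (h : TransGen R u v) :
    ∃ p : H.Walk u v, 0 < p.length ∧ ∀ d ∈ p.darts, R d.toProd.1 d.toProd.2 := by
  induction h with
  | single hr =>
    refine ⟨SimpleGraph.Walk.cons (hadj _ _ hr) SimpleGraph.Walk.nil, by simp, ?_⟩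
    intro d hd
    simp only [SimpleGraph.Walk.darts_cons, SimpleGraph.Walk.darts_nil, List.mem_singleton] at hd
    subst hd
    exact hr
  | tail hbc hr ih =>
    obtain ⟨p, hl, hd⟩ := ih
    refine ⟨p.concat (hadj _ _ hr), by simp [SimpleGraph.Walk.length_concat], ?_⟩
    intro d hdm
    simp only [SimpleGraph.Walk.darts_concat, List.concat_eq_append, List.mem_append,
      List.mem_singleton] at hdm
    rcases hdm with hdm | hdm
    · exact hd d hdm
    · subst hdm
      exact hr

lemma no_transGen_loop_of_acyclic {H : SimpleGraph V} (hac : H.IsAcyclic)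
    {R : V → V → Prop} (hadj : ∀ u v, R u v → H.Adj u v)
    (hanti : ∀ u v, R u v → R v u → False) :
    ∀ v, ¬ TransGen R v v := by
  classical
  intro v0 hloop
  set S : Set ℕ := {l | ∃ (v : V) (p : H.Walk v v), p.length = l ∧ 0 < l ∧
    ∀ d ∈ p.darts, R d.toProd.1 d.toProd.2} with hS
  have hne : S.Nonempty := by
    obtain ⟨p, hl, hd⟩ := walk_of_transGen hadj hloop
    exact ⟨p.length, v0, p, rfl, hl, hd⟩
  obtain ⟨v, p, hplen, hpos, hdarts⟩ := Nat.sInf_mem hne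
  have hnodup : p.support.tail.Nodup := by
    by_contra hdup
    rw [List.nodup_iff_count_le_one] at hdup
    push_neg at hdup
    obtain ⟨x, hx2'⟩ := hdup
    have hx2 : 2 ≤ p.support.tail.count x := hx2'
    have hxmem : x ∈ p.support := by
      refine List.mem_of_mem_tail ?_
      by_contra hxn
      rw [List.count_eq_zero_of_not_mem hxn] at hx2
      omega
    obtain ⟨r, hrdarts, hrcount, hrlen⟩ :
        ∃ r : H.Walk x x, (∀ d ∈ r.darts, R d.toProd.1 d.toProd.2) ∧
          2 ≤ r.support.tail.count x ∧ r.length = p.length := by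
      refine ⟨p.rotate x hxmem, ?_, ?_, ?_⟩
      · intro d hd
        exact hdarts d ((p.rotate_darts x hxmem).perm.mem_iff.1 hd)
      · have := (p.support_rotate x hxmem).perm.count_eq x
        omega
      · have h1 := (p.rotate_darts x hxmem).perm.length_eq
        simpa [SimpleGraph.Walk.length_darts] using h1
    cases r with
    | nil => simp at hrcount
    | cons hxy r₂ =>
      rename_i y
      have hxr₂ : 2 ≤ r₂.support.count x := by simpa using hrcount
      have hxmem₂ : x ∈ r₂.support := by
        by_contra hxn
        rw [List.count_eq_zero_of_not_mem hxn] at hxr₂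
        omega
      have hsplit := r₂.take_spec hxmem₂
      have hdlen : 0 < (r₂.dropUntil x hxmem₂).length := by
        by_contra hd0
        push_neg at hd0
        have hnil : r₂.dropUntil x hxmem₂ = SimpleGraph.Walk.nil := by
          cases hq : r₂.dropUntil x hxmem₂ with
          | nil => rfl
          | cons h q =>
            rw [hq] at hd0
            simp at hd0
        have hcount1 : r₂.support.count x = 1 := by
          conv_lhs => rw [← hsplit]
          rw [SimpleGraph.Walk.support_append, hnil]
          simp [SimpleGraph.Walk.count_support_takeUntil_eq_one]
        omega
      have htlen : (r₂.takeUntil x hxmem₂).length < r₂.length := by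
        have h2 := congrArg SimpleGraph.Walk.length hsplit
        rw [SimpleGraph.Walk.length_append] at h2
        omega
      have hmem : (SimpleGraph.Walk.cons hxy (r₂.takeUntil x hxmem₂)).length ∈ S := by
        refine ⟨x, SimpleGraph.Walk.cons hxy (r₂.takeUntil x hxmem₂), rfl, by simp, ?_⟩
        intro d hd
        rw [SimpleGraph.Walk.darts_cons, List.mem_cons] at hd
        rcases hd with hd | hd
        · subst hd
          exact hrdarts _ (by rw [SimpleGraph.Walk.darts_cons]; exact List.mem_cons_self)
        · refine hrdarts d ?_
          rw [SimpleGraph.Walk.darts_cons]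
          exact List.mem_cons_of_mem _ (r₂.darts_takeUntil_subset hxmem₂ hd)
      have hle := Nat.sInf_le hmem
      rw [SimpleGraph.Walk.length_cons] at hle hrlen
      omega
  cases p with
  | nil =>
    rw [SimpleGraph.Walk.length_nil] at hplen
    omega
  | cons hvw q =>
    rename_i w
    have hq : q.IsPath := by
      rw [SimpleGraph.Walk.isPath_def]
      simpa using hnodup
    have hRvw : R v w :=
      hdarts ⟨(v, w), hvw⟩ (by rw [SimpleGraph.Walk.darts_cons]; exact List.mem_cons_self)
    have hsing : (⟨q, hq⟩ : H.Path w v) = SimpleGraph.Path.singleton hvw.symm :=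
      isAcyclic_iff_path_unique.1 hac _ _
    have hq' : q = SimpleGraph.Walk.cons hvw.symm SimpleGraph.Walk.nil := by
      have h3 := congrArg Subtype.val hsing
      simpa [SimpleGraph.Path.singleton] using h3
    have hRwv : R w v := by
      refine hdarts ⟨(w, v), hvw.symm⟩ ?_
      rw [SimpleGraph.Walk.darts_cons, hq']
      simp [SimpleGraph.Walk.darts_cons]
    exact hanti v w hRvw hRwv


lemma exists_strict_linear {R : V → V → Prop} (hR : ∀ v, ¬ TransGen R v v) :
    ∃ lt : V → V → Prop, Transitive lt ∧ Irreflexive lt ∧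
      (∀ u v, R u v → lt u v) ∧ (∀ u v, u ≠ v → lt u v ∨ lt v u) := by
  haveI hpo : IsPartialOrder V (ReflTransGen R) :=
    { refl := fun _ => ReflTransGen.refl
      trans := fun _ _ _ hab hbc => hab.trans hbc
      antisymm := fun a b hab hba => by
        rcases Relation.reflTransGen_iff_eq_or_transGen.1 hab with rfl | ht
        · rfl
        · exact absurd (ht.trans_right hba) (hR b) }
  obtain ⟨le', hlin, hle⟩ := extend_partialOrder (ReflTransGen R)
  haveI := hlin
  refine ⟨fun u v => le' u v ∧ u ≠ v, ?_, ?_, ?_, ?_⟩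
  · rintro a b c ⟨hab, hne1⟩ ⟨hbc, hne2⟩
    refine ⟨Trans.trans hab hbc, ?_⟩
    rintro rfl
    exact hne1 (Std.Antisymm.antisymm _ _ hab hbc)
  · rintro a ⟨-, hne⟩
    exact hne rfl
  · intro u v hr
    refine ⟨hle _ _ (ReflTransGen.single hr), ?_⟩
    rintro rfl
    exact hR u (TransGen.single hr)
  · intro u v hne
    rcases Std.Total.total (r := le') u v with h | h
    · exact Or.inl ⟨h, hne⟩
    · exact Or.inr ⟨h, hne.symm⟩

lemma exists_acyclic_extension (hρ : ∀ e ∈ G.edgeSet, Sym2.mk (ρ e).1 (ρ e).2 = e)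
    (X : Set G.edgeSet) (hac : (subgraphOf G X).IsAcyclic) (d0 : G.edgeSet → Bool) :
    ∃ h : G.edgeSet → Bool, Set.EqOn h d0 X ∧ ¬ HasDiCycle (arcs G ρ h) := by
  classical
  have hnl : ∀ v, ¬ TransGen (arcsOn G ρ X d0) v v :=
    no_transGen_loop_of_acyclic hac (fun u v h => arcsOn_adj hρ h)
      (fun u v h1 h2 => arcsOn_antisymm hρ h1 h2)
  obtain ⟨lt, hltt, hlti, hltR, hlttot⟩ := exists_strict_linear hnl
  refine ⟨fun e => if e ∈ X then d0 e else (if lt (ρ e.val).1 (ρ e.val).2 then false else true),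
    ?_, ?_⟩
  · intro e he
    simp [he]
  · rintro ⟨v, hT⟩
    have harc : ∀ u w, arcs G ρ
        (fun e => if e ∈ X then d0 e else (if lt (ρ e.val).1 (ρ e.val).2 then false else true))
        u w → lt u w := by
      rintro u w ⟨e, -, hc⟩
      by_cases heX : e ∈ X
      · refine hltR u w ⟨e, heX, ?_⟩
        simpa [heX] using hc
      · rcases hc with ⟨hf, hr⟩ | ⟨ht2, hr⟩
        · have hf' : (if e ∈ X then d0 e
              else if lt (ρ e.val).1 (ρ e.val).2 then false else true) = false := hf
          by_cases hlt : lt (ρ e.val).1 (ρ e.val).2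
          · rw [hr] at hlt
            exact hlt
          · rw [if_neg heX, if_neg hlt] at hf'
            simp at hf'
        · have ht' : (if e ∈ X then d0 e
              else if lt (ρ e.val).1 (ρ e.val).2 then false else true) = true := ht2
          have hne : u ≠ w := by
            intro huw
            apply G.not_isDiag_of_mem_edgeSet e.prop
            rw [← hρ e.val e.prop, hr, huw]
            exact Sym2.mk_isDiag_iff.2 rfl
          by_cases hlt : lt (ρ e.val).1 (ρ e.val).2
          · rw [if_neg heX, if_pos hlt] at ht'
            simp at ht'
          · rw [hr] at hlt
            rcases hlttot u w hne with h | h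
            · exact h
            · exact absurd h hlt
    have := TransGen.mono (fun a b h => harc a b h) _ _ hT
    haveI hIT : IsTrans V lt := ⟨fun _ _ _ => @hltt _ _ _⟩
    rw [transGen_eq_self] at this
    exact hlti v this


/-- Map on connected components induced by a subgraph relation. -/
def ccMap {H H' : SimpleGraph V} (hle : H ≤ H') :
    H.ConnectedComponent → H'.ConnectedComponent :=
  SimpleGraph.ConnectedComponent.map (SimpleGraph.Hom.ofLE hle)

lemma ccMap_mk {H H' : SimpleGraph V} (hle : H ≤ H') (v : V) :
    ccMap hle (H.connectedComponentMk v) = H'.connectedComponentMk v := rfl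

lemma ccMap_surjective {H H' : SimpleGraph V} (hle : H ≤ H') :
    Function.Surjective (ccMap hle) := by
  intro c
  refine c.ind fun v => ⟨H.connectedComponentMk v, rfl⟩

lemma reach_delete_cases {H : SimpleGraph V} {a b v w : V} (p : H.Walk v w) :
    (H.deleteEdges {s(a,b)}).Reachable v w ∨
      ((H.deleteEdges {s(a,b)}).Reachable v a ∨ (H.deleteEdges {s(a,b)}).Reachable v b) ∧
      ((H.deleteEdges {s(a,b)}).Reachable w a ∨ (H.deleteEdges {s(a,b)}).Reachable w b) := by
  classical
  induction p with
  | nil => exact Or.inl (Reachable.refl _)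
  | cons hadj q ih =>
    rename_i u x y
    by_cases hex : s(u, x) = s(a, b)
    · have hvside : (H.deleteEdges {s(a,b)}).Reachable u a ∨
          (H.deleteEdges {s(a,b)}).Reachable u b := by
        rcases Sym2.eq_iff.1 hex with ⟨rfl, rfl⟩ | ⟨rfl, rfl⟩
        · exact Or.inl (Reachable.refl _)
        · exact Or.inr (Reachable.refl _)
      have hxside : (H.deleteEdges {s(a,b)}).Reachable x a ∨
          (H.deleteEdges {s(a,b)}).Reachable x b := by
        rcases Sym2.eq_iff.1 hex with ⟨rfl, rfl⟩ | ⟨rfl, rfl⟩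
        · exact Or.inr (Reachable.refl _)
        · exact Or.inl (Reachable.refl _)
      refine Or.inr ⟨hvside, ?_⟩
      rcases ih with hxy | ⟨-, hyside⟩
      · rcases hxside with h | h
        · exact Or.inl (hxy.symm.trans h)
        · exact Or.inr (hxy.symm.trans h)
      · exact hyside
    · have hadj' : (H.deleteEdges {s(a,b)}).Adj u x := by
        rw [SimpleGraph.deleteEdges_adj]
        exact ⟨hadj, by simpa using hex⟩
      rcases ih with hxy | ⟨hxside, hyside⟩
      · exact Or.inl (hadj'.reachable.trans hxy)
      · refine Or.inr ⟨?_, hyside⟩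
        rcases hxside with h | h
        · exact Or.inl (hadj'.reachable.trans h)
        · exact Or.inr (hadj'.reachable.trans h)


lemma card_cc_deleteEdge [Fintype V] {H : SimpleGraph V} {a b : V}
    (hadj : H.Adj a b) (hnr : ¬ (H.deleteEdges {s(a,b)}).Reachable a b) :
    Nat.card (H.deleteEdges {s(a,b)}).ConnectedComponent
      = Nat.card H.ConnectedComponent + 1 := by
  classical
  set H' := H.deleteEdges {s(a,b)} with hH'
  have hle : H' ≤ H := SimpleGraph.deleteEdges_le _
  haveI : Fintype H.ConnectedComponent := Fintype.ofFinite _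
  haveI : Fintype H'.ConnectedComponent := Fintype.ofFinite _
  set φ := ccMap hle with hφ
  set c₀ := H.connectedComponentMk a with hc₀
  -- fiber description over c₀
  have key1 : ∀ x : H'.ConnectedComponent, φ x = c₀ ↔
      x = H'.connectedComponentMk a ∨ x = H'.connectedComponentMk b := by
    refine SimpleGraph.ConnectedComponent.ind fun v => ?_
    constructor
    · intro hx
      have hreach : H.Reachable v a := SimpleGraph.ConnectedComponent.exact hx
      obtain ⟨p⟩ := hreach
      rcases reach_delete_cases (a := a) (b := b) p with h | ⟨hv, -⟩
      · exact Or.inl (SimpleGraph.ConnectedComponent.sound h)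
      · rcases hv with h | h
        · exact Or.inl (SimpleGraph.ConnectedComponent.sound h)
        · exact Or.inr (SimpleGraph.ConnectedComponent.sound h)
    · rintro (h | h)
      · rw [show (H'.connectedComponentMk v) = H'.connectedComponentMk a from h]
        rfl
      · have : φ (H'.connectedComponentMk v) = H.connectedComponentMk b := by
          rw [show (H'.connectedComponentMk v) = H'.connectedComponentMk b from h]
          rfl
        rw [this, hc₀]
        exact SimpleGraph.ConnectedComponent.sound hadj.reachable.symm
  have hab' : H'.connectedComponentMk a ≠ H'.connectedComponentMk b := by
    intro h
    exact hnr (SimpleGraph.ConnectedComponent.exact h)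
  -- fibers over other components are singletons
  have key2 : ∀ c : H.ConnectedComponent, c ≠ c₀ →
      (Finset.univ.filter fun x => φ x = c).card = 1 := by
    intro c hc
    obtain ⟨v, rfl⟩ := c.exists_rep
    rw [Finset.card_eq_one]
    refine ⟨H'.connectedComponentMk v, ?_⟩
    ext x
    simp only [Finset.mem_filter, Finset.mem_univ, true_and, Finset.mem_singleton]
    constructor
    · intro hx
      revert hx
      refine SimpleGraph.ConnectedComponent.ind (fun w => ?_) x
      intro hx
      have hreach : H.Reachable w v := SimpleGraph.ConnectedComponent.exact hx
      obtain ⟨p⟩ := hreach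
      rcases reach_delete_cases (a := a) (b := b) p with h | ⟨hw, -⟩
      · exact SimpleGraph.ConnectedComponent.sound h
      · exfalso
        apply hc
        rw [← hx, hc₀]
        have hwa : H.Reachable w a := by
          rcases hw with h | h
          · exact h.mono hle
          · exact (h.mono hle).trans hadj.reachable.symm
        exact SimpleGraph.ConnectedComponent.sound hwa
    · rintro rfl
      rfl
  have key3 : (Finset.univ.filter fun x => φ x = c₀).card = 2 := by
    have : (Finset.univ.filter fun x => φ x = c₀) =
        {H'.connectedComponentMk a, H'.connectedComponentMk b} := by
      ext x
      simp only [Finset.mem_filter, Finset.mem_univ, true_and, Finset.mem_insert,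
        Finset.mem_singleton]
      exact key1 x
    rw [this, Finset.card_insert_of_notMem (by simpa using hab'), Finset.card_singleton]
  have hsum := Finset.card_eq_sum_card_fiberwise
    (f := φ) (s := Finset.univ) (t := Finset.univ) (fun x _ => Finset.mem_univ _)
  rw [← Finset.add_sum_erase _ _ (Finset.mem_univ c₀)] at hsum
  have herase : ∀ c ∈ Finset.univ.erase c₀,
      (Finset.univ.filter fun x => φ x = c).card = 1 := by
    intro c hcmem
    exact key2 c (Finset.mem_erase.1 hcmem).1
  rw [Finset.sum_congr rfl herase, Finset.sum_const, smul_eq_mul, mul_one,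
    Finset.card_erase_of_mem (Finset.mem_univ _), key3] at hsum
  have hpos : 0 < Fintype.card H.ConnectedComponent := Fintype.card_pos_iff.2 ⟨c₀⟩
  rw [Nat.card_eq_fintype_card, Nat.card_eq_fintype_card]
  rw [Finset.card_univ, Finset.card_univ] at hsum
  omega


lemma isAcyclic_anti {H H' : SimpleGraph V} (hle : H' ≤ H) (hac : H.IsAcyclic) :
    H'.IsAcyclic := by
  intro v p hp
  exact hac (p.mapLe hle) (hp.mapLe hle)

lemma forest_count [Fintype V] :
    ∀ (N : ℕ) (H : SimpleGraph V), H.IsAcyclic → Nat.card H.edgeSet = N →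
      N + Nat.card H.ConnectedComponent = Fintype.card V := by
  intro N
  induction N using Nat.strong_induction_on with
  | _ N ih =>
    intro H hac hcard
    by_cases hE : H.edgeSet = ∅
    · have hbot : H = ⊥ := SimpleGraph.edgeSet_eq_empty.1 hE
      subst hbot
      have h0 : N = 0 := by
        rw [← hcard, hE]
        simp
      subst h0
      have hequiv : Function.Bijective ((⊥ : SimpleGraph V).connectedComponentMk) := by
        constructor
        · intro u v h
          have := SimpleGraph.ConnectedComponent.exact h
          rwa [SimpleGraph.reachable_bot] at this
        · intro c
          exact c.exists_rep
      rw [← Nat.card_eq_of_bijective _ hequiv, Nat.card_eq_fintype_card]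
      omega
    · obtain ⟨e, he⟩ := Set.nonempty_iff_ne_empty.2 hE
      induction e using Sym2.ind with
      | _ a b =>
        have hadj : H.Adj a b := he
        have hbridge : ¬ (H.deleteEdges {s(a,b)}).Reachable a b := by
          have hb := (isAcyclic_iff_forall_adj_isBridge.1 hac) hadj
          rw [SimpleGraph.isBridge_iff] at hb
          exact hb
        have hN1 : 1 ≤ N := by
          rw [← hcard]
          have : Nonempty H.edgeSet := ⟨⟨s(a,b), he⟩⟩
          exact Nat.one_le_iff_ne_zero.2 (Nat.card_ne_zero.2 ⟨this, Set.toFinite _⟩)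
        have hcard' : Nat.card (H.deleteEdges {s(a,b)}).edgeSet = N - 1 := by
          rw [Nat.card_coe_set_eq, SimpleGraph.edgeSet_deleteEdges]
          have := Set.ncard_diff_singleton_add_one (s := H.edgeSet) (a := s(a,b)) he
            (Set.toFinite _)
          rw [Nat.card_coe_set_eq] at hcard
          have h2 : H.edgeSet.ncard = N := hcard
          omega
        have hih := ih (N - 1) (by omega) (H.deleteEdges {s(a,b)})
          (isAcyclic_anti (SimpleGraph.deleteEdges_le _) hac) hcard'
        rw [card_cc_deleteEdge hadj hbridge] at hih
        omega


lemma bot_isAcyclic : (⊥ : SimpleGraph V).IsAcyclic := by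
  intro v p hp
  cases p with
  | nil => exact hp.ne_nil rfl
  | cons h q => simp at h

lemma subgraphOf_empty (G : SimpleGraph V) : subgraphOf G (∅ : Set G.edgeSet) = ⊥ := by
  rw [subgraphOf, Set.image_empty, SimpleGraph.fromEdgeSet_empty]

lemma exists_spanning_forest [Fintype V] (G : SimpleGraph V) :
    ∃ X : Set G.edgeSet, (subgraphOf G X).IsAcyclic ∧
      ∀ u v : V, G.Reachable u v → (subgraphOf G X).Reachable u v := by
  classical
  set S := {X : Set G.edgeSet | (subgraphOf G X).IsAcyclic} with hS
  have hSne : S.Nonempty := ⟨∅, by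
    show (subgraphOf G ∅).IsAcyclic
    rw [subgraphOf_empty]
    exact bot_isAcyclic⟩
  obtain ⟨X, hXS, hmax⟩ := Set.Finite.exists_maximalFor Set.ncard S (Set.toFinite S) hSne
  have hXac : (subgraphOf G X).IsAcyclic := hXS
  refine ⟨X, hXac, ?_⟩
  have key : ∀ u w : V, G.Adj u w → (subgraphOf G X).Reachable u w := by
    intro u w huw
    have hmem : s(u,w) ∈ G.edgeSet := huw
    set e : G.edgeSet := ⟨s(u,w), hmem⟩ with he
    by_cases heX : e ∈ X
    · refine SimpleGraph.Adj.reachable ?_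
      rw [subgraphOf, SimpleGraph.fromEdgeSet_adj]
      exact ⟨⟨e, heX, rfl⟩, huw.ne⟩
    · by_contra hnr
      have hacK : (subgraphOf G (insert e X)).IsAcyclic := by
        intro z p hp
        by_cases hpe : s(u,w) ∈ p.edges
        · have h2 := (SimpleGraph.adj_and_reachable_delete_edges_iff_exists_cycle
            (G := subgraphOf G (insert e X))).2 ⟨z, p, hp, hpe⟩
          apply hnr
          refine (h2.2).mono ?_
          rw [← SimpleGraph.edgeSet_subset_edgeSet]
          intro x hx
          rw [SimpleGraph.edgeSet_deleteEdges] at hx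
          obtain ⟨hx1, hx2⟩ := hx
          rw [edgeSet_subgraphOf, Set.image_insert_eq] at hx1
          rw [edgeSet_subgraphOf]
          rcases hx1 with rfl | hx1
          · exfalso
            apply hx2
            exact rfl
          · exact hx1
        · have hsub : ∀ x ∈ p.edges, x ∈ (subgraphOf G X).edgeSet := by
            intro x hxp
            have hx1 := p.edges_subset_edgeSet hxp
            rw [edgeSet_subgraphOf, Set.image_insert_eq] at hx1
            rw [edgeSet_subgraphOf]
            rcases hx1 with rfl | hx1
            · exact absurd hxp hpe
            · exact hx1
          exact hXac (p.transfer _ hsub) (hp.transfer hsub)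
      have hins : insert e X ∈ S := hacK
      have hcard := hmax hins
        (Set.ncard_le_ncard (Set.subset_insert e X) (Set.toFinite _))
      rw [Set.ncard_insert_of_notMem heX (Set.toFinite X)] at hcard
      omega
  intro u v huv
  obtain ⟨p⟩ := huv
  induction p with
  | nil => exact Reachable.refl _
  | cons hadj q ih => exact (key _ _ hadj).trans ih


lemma card_edgeSet_subgraphOf (X : Set G.edgeSet) :
    Nat.card (subgraphOf G X).edgeSet = X.ncard := by
  rw [Nat.card_coe_set_eq, edgeSet_subgraphOf,
    Set.ncard_image_of_injective _ Subtype.val_injective]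

lemma shatters_acyclic [Fintype V] (hρ : ∀ e ∈ G.edgeSet, Sym2.mk (ρ e).1 (ρ e).2 = e)
    {Y : Set G.edgeSet}
    (hsh : Shatters ({d : G.edgeSet → Bool | HasDiCycle (arcs G ρ d)}ᶜ) Y) :
    (subgraphOf G Y).IsAcyclic := by
  by_contra hnac
  simp only [SimpleGraph.IsAcyclic, not_forall, not_not] at hnac
  obtain ⟨v, p, hp⟩ := hnac
  set p' := p.mapLe (subgraphOf_le Y) with hp'def
  have hp' : p'.IsCycle := hp.mapLe _
  have hedges : p'.edges = p.edges := by
    simp only [hp'def, SimpleGraph.Walk.mapLe, SimpleGraph.Walk.edges_map]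
    rw [List.map_congr_left (fun x _ => ?_), List.map_id]
    have : Sym2.map (⇑(SimpleGraph.Hom.ofLE (subgraphOf_le Y))) x
        = Sym2.map id x := by
      apply Sym2.map_congr  -- ∀ congr
      intro a _
      simp [SimpleGraph.Hom.coe_ofLE]
    rw [this, Sym2.map_id]
  obtain ⟨h, hmemS, heq⟩ := hsh (dOfWalk G ρ p')
  have hag : ∀ e : G.edgeSet, e.val ∈ p'.edges → h e = dOfWalk G ρ p' e := by
    intro e he
    rw [hedges] at he
    have := p.edges_subset_edgeSet he
    rw [edgeSet_subgraphOf] at this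
    obtain ⟨e', he', hee⟩ := this
    have : e ∈ Y := by
      rwa [show e' = e from Subtype.ext hee] at he'
    exact heq this
  have hcyc : HasDiCycle (arcs G ρ h) :=
    ⟨v, transGen_arcs_of_walk hρ p' hp'.isTrail.edges_nodup
      (by have := hp'.three_le_length; omega) h hag⟩
  exact hmemS hcyc

lemma vc_part [Fintype V] (hρ : ∀ e ∈ G.edgeSet, Sym2.mk (ρ e).1 (ρ e).2 = e) :
    IsGreatest {t | ∃ Y : Set G.edgeSet,
        Shatters ({d : G.edgeSet → Bool | HasDiCycle (arcs G ρ d)}ᶜ) Y ∧ Y.ncard = t}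
      (Fintype.card V - Nat.card G.ConnectedComponent) := by
  classical
  constructor
  · -- membership: a spanning forest is shattered
    obtain ⟨X, hXac, hXsp⟩ := exists_spanning_forest G
    have hbij : Function.Bijective (ccMap (subgraphOf_le X)) := by
      constructor
      · refine SimpleGraph.ConnectedComponent.ind₂ fun u v h => ?_
        have : G.Reachable u v := SimpleGraph.ConnectedComponent.exact h
        exact SimpleGraph.ConnectedComponent.sound (hXsp u v this)
      · exact ccMap_surjective _
    have hcc : Nat.card (subgraphOf G X).ConnectedComponent
        = Nat.card G.ConnectedComponent := Nat.card_eq_of_bijective _ hbij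
    have hcount := forest_count (X.ncard) (subgraphOf G X) hXac (card_edgeSet_subgraphOf X)
    refine ⟨X, ?_, by omega⟩
    intro f
    obtain ⟨h, heq, hnd⟩ := exists_acyclic_extension hρ X hXac f
    exact ⟨h, hnd, heq⟩
  · -- upper bound
    rintro t ⟨Y, hsh, rfl⟩
    have hYac := shatters_acyclic hρ hsh
    have hcount := forest_count (Y.ncard) (subgraphOf G Y) hYac (card_edgeSet_subgraphOf Y)
    have hle : Nat.card G.ConnectedComponent
        ≤ Nat.card (subgraphOf G Y).ConnectedComponent :=
      Nat.card_le_card_of_surjective _ (ccMap_surjective (subgraphOf_le Y))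
    omega


lemma acyclic_of_small [Fintype V] {c : ℕ}
    (hmin : ∀ (v : V) (p : G.Walk v v), p.IsCycle → c ≤ p.length)
    {Z : Set G.edgeSet} (hZ : Z.ncard < c) : (subgraphOf G Z).IsAcyclic := by
  classical
  intro v p hp
  have hq : (p.mapLe (subgraphOf_le Z)).IsCycle := hp.mapLe _
  have hlen : c ≤ p.length := by
    have := hmin v _ hq
    simpa [SimpleGraph.Walk.mapLe, SimpleGraph.Walk.length_map] using this
  have hnd : p.edges.Nodup := hp.isTrail.edges_nodup
  have hsub : (p.edges.toFinset : Set (Sym2 V)) ⊆ Subtype.val '' Z := by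
    intro x hx
    have : x ∈ p.edges := by simpa using hx
    have h2 := p.edges_subset_edgeSet this
    rwa [edgeSet_subgraphOf] at h2
  have hle : p.edges.length ≤ Z.ncard := by
    calc p.edges.length = p.edges.toFinset.card := (List.toFinset_card_of_nodup hnd).symm
    _ = (p.edges.toFinset : Set (Sym2 V)).ncard := (Set.ncard_coe_finset _).symm
    _ ≤ (Subtype.val '' Z).ncard := Set.ncard_le_ncard hsub (Set.toFinite _)
    _ = Z.ncard := Set.ncard_image_of_injective _ Subtype.val_injective
  rw [SimpleGraph.Walk.length_edges] at hle
  omega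

lemma dvc_part [Fintype V] (hρ : ∀ e ∈ G.edgeSet, Sym2.mk (ρ e).1 (ρ e).2 = e) {c : ℕ}
    (hex : ∃ (v : V) (p : G.Walk v v), p.IsCycle ∧ p.length = c)
    (hmin : ∀ (v : V) (p : G.Walk v v), p.IsCycle → c ≤ p.length) :
    IsGreatest {t | ∃ Y : Set G.edgeSet,
        StronglyShatters {d : G.edgeSet → Bool | HasDiCycle (arcs G ρ d)} Y ∧ Y.ncard = t}
      (Nat.card G.edgeSet - c) := by
  classical
  constructor
  · obtain ⟨v, p, hp, hlen⟩ := hex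
    set C : Set G.edgeSet := {e : G.edgeSet | e.val ∈ p.edges} with hC
    have himg : Subtype.val '' C = {x | x ∈ p.edges} := by
      ext x
      constructor
      · rintro ⟨e, he', rfl⟩
        exact he'
      · intro hx
        exact ⟨⟨x, p.edges_subset_edgeSet hx⟩, hx, rfl⟩
    have hCcard : C.ncard = c := by
      have h1 : C.ncard = (Subtype.val '' C).ncard :=
        (Set.ncard_image_of_injective _ Subtype.val_injective).symm
      have h2 : ({x | x ∈ p.edges} : Set (Sym2 V)) = ↑p.edges.toFinset := by
        ext x
        simp
      rw [h1, himg, h2, Set.ncard_coe_finset,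
        List.toFinset_card_of_nodup hp.isTrail.edges_nodup, SimpleGraph.Walk.length_edges, hlen]
    have hsum := Set.ncard_add_ncard_compl C (Set.toFinite _) (Set.toFinite _)
    refine ⟨Cᶜ, ⟨dOfWalk G ρ p, ?_⟩, by omega⟩
    intro f
    refine ⟨fun e => if e ∈ Cᶜ then f e else dOfWalk G ρ p e, ?_, ?_, ?_⟩
    · refine ⟨v, transGen_arcs_of_walk hρ p hp.isTrail.edges_nodup
        (by have := hp.three_le_length; omega) _ ?_⟩
      intro e he
      have hne : e ∉ Cᶜ := by
        simp only [Set.mem_compl_iff, not_not]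
        exact he
      show (if e ∈ Cᶜ then f e else dOfWalk G ρ p e) = dOfWalk G ρ p e
      rw [if_neg hne]
    · intro e he
      show (if e ∈ Cᶜ then f e else dOfWalk G ρ p e) = f e
      rw [if_pos he]
    · intro e he
      rw [compl_compl] at he
      have hne : e ∉ Cᶜ := by
        simp only [Set.mem_compl_iff, not_not]
        exact he
      show (if e ∈ Cᶜ then f e else dOfWalk G ρ p e) = dOfWalk G ρ p e
      rw [if_neg hne]
  · rintro t ⟨Y, ⟨g, hg⟩, rfl⟩
    have hcc : c ≤ Yᶜ.ncard := by
      by_contra hlt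
      push_neg at hlt
      have hZac := acyclic_of_small hmin hlt
      obtain ⟨h, heq, hnd⟩ := exists_acyclic_extension hρ Yᶜ hZac g
      obtain ⟨h', hS, heqY, heqZ⟩ := hg h
      have hh : h' = h := by
        funext e
        by_cases heY : e ∈ Y
        · exact heqY heY
        · have heZ : e ∈ Yᶜ := heY
          exact (heqZ heZ).trans (heq heZ).symm
      rw [hh] at hS
      exact hnd hS
    have hsum := Set.ncard_add_ncard_compl Y (Set.toFinite _) (Set.toFinite _)
    omega

end Aux


/-- for the system `𝕊_cyc` of orientations of `G` containing a directed
cycle, (i) `vc(¬𝕊_cyc) = n − k` where `k` is the number of connected components of `G`,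
and (ii) if `G` contains a cycle and `c` is the length of a smallest cycle of `G`, then
`dvc(𝕊_cyc) = m − c`. -/
theorem vc_dvc_cyclic {V : Type*} [Fintype V] (G : SimpleGraph V)
    (ρ : Sym2 V → V × V) (hρ : ∀ e ∈ G.edgeSet, Sym2.mk (ρ e).1 (ρ e).2 = e)
    (n m k : ℕ) (hn : Fintype.card V = n) (hm : Nat.card G.edgeSet = m)
    (hk : Nat.card G.ConnectedComponent = k) :
    vcNat ({d : G.edgeSet → Bool | HasDiCycle (arcs G ρ d)}ᶜ) = n - k ∧
    ∀ c : ℕ,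
      (∃ (v : V) (p : G.Walk v v), p.IsCycle ∧ p.length = c) →
      (∀ (v : V) (p : G.Walk v v), p.IsCycle → c ≤ p.length) →
      dvcNat {d : G.edgeSet → Bool | HasDiCycle (arcs G ρ d)} = m - c := by
  subst hn hm hk
  constructor
  · rw [vcNat]
    exact (vc_part hρ).csSup_eq
  · intro c hex hmin
    rw [dvcNat]
    exact (dvc_part hρ hex hmin).csSup_eq
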